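/- arXiv:2605.05149 — 4 statements merged into one kernel-verified Lean document; each statement's English description precedes it below -/
import Mathlib

section
/- Let G be a graph of maximum degree Δ and let λ ∈ [0,∞)^{V(G)} satisfy λ_u < 1/Δ for all u. Then the expected size of a random independent set from the hard-core model at fugacity λ satisfies E|X| ≥ Σ_{u∈V(G)} λ_u/(1 + (d_u+1)λ_u), where d_u is the degree of u. -/
open Finset

set_option linter.unusedSectionVars false
set_option maxHeartbeats 1000000

namespace MultivarOcc

variable {V : Type*} [Fintype V] [DecidableEq V] (G : SimpleGraph V) [DecidableRel G.Adj]
  (lam : V → ℝ)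

lemma nbr_swap (f : V → V → ℝ) :
    ∑ u : V, ∑ w ∈ G.neighborFinset u, f u w = ∑ u : V, ∑ w ∈ G.neighborFinset u, f w u := by
  have key : ∀ g : V → V → ℝ, ∑ u : V, ∑ w ∈ G.neighborFinset u, g u w
      = ∑ u : V, ∑ w : V, if G.Adj u w then g u w else 0 := by
    intro g
    refine Finset.sum_congr rfl fun u _ => ?_
    rw [SimpleGraph.neighborFinset_eq_filter, Finset.sum_filter]
  rw [key, key]
  rw [Finset.sum_comm]
  refine Finset.sum_congr rfl fun u _ => Finset.sum_congr rfl fun w _ => ?_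
  congr 1
  simp [G.adj_comm]

lemma sum_z_ge (D : ℝ) (hD : 1 ≤ D) (hdeg : ∀ u, (G.degree u : ℝ) ≤ D)
    (m : V → ℝ) (hm0 : ∀ u, 0 ≤ m u) (hm1 : ∀ u, m u ≤ 1 / (D + 1))
    (z : V → ℝ) (hz : ∀ u, z u = m u * (1 - ∑ w ∈ G.neighborFinset u, z w))
    (hz0 : ∀ u, 0 ≤ z u) (hzm : ∀ u, z u ≤ m u) :
    ∑ u : V, m u * (1 / (1 + (G.degree u : ℝ) * m u)) ≤ ∑ u : V, z u := by
  have hD0 : (0:ℝ) < D := lt_of_lt_of_le one_pos hD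
  have hD10 : (0:ℝ) < D + 1 := by linarith
  set d : V → ℝ := fun u => (G.degree u : ℝ) with hd
  have hd0 : ∀ u, 0 ≤ d u := fun u => Nat.cast_nonneg _
  have hdenom : ∀ u, 0 < 1 + d u * m u := fun u => by
    have := mul_nonneg (hd0 u) (hm0 u); linarith
  set σ : V → ℝ := fun u => 1 / (1 + d u * m u) with hσ
  set τ : V → ℝ := fun u => m u * σ u with hτ
  have hσpos : ∀ u, 0 < σ u := fun u => one_div_pos.mpr (hdenom u)
  have hσ1 : ∀ u, σ u * (1 + d u * m u) = 1 := fun u => by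
    simp only [hσ]
    rw [one_div, inv_mul_cancel₀ (hdenom u).ne']
  have hσle1 : ∀ u, σ u ≤ 1 := fun u => by
    simp only [hσ]
    rw [div_le_one (hdenom u)]
    have := mul_nonneg (hd0 u) (hm0 u); linarith
  have hτ0 : ∀ u, 0 ≤ τ u := fun u => mul_nonneg (hm0 u) (hσpos u).le
  have hτm : ∀ u, τ u ≤ m u := fun u => by
    calc τ u = m u * σ u := rfl
      _ ≤ m u * 1 := mul_le_mul_of_nonneg_left (hσle1 u) (hm0 u)
      _ = m u := mul_one _
  set r : V → ℝ := fun u => 1 - ∑ w ∈ G.neighborFinset u, z w with hr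
  have hzr : ∀ u, z u = m u * r u := fun u => hz u
  have hdcard : ∀ (u : V) (c : ℝ), ∑ _w ∈ G.neighborFinset u, c = d u * c := by
    intro u c; rw [Finset.sum_const, nsmul_eq_mul, G.card_neighborFinset_eq_degree]
  have hSm : ∀ u, ∑ w ∈ G.neighborFinset u, m w ≤ D / (D + 1) := by
    intro u
    calc ∑ w ∈ G.neighborFinset u, m w ≤ ∑ _w ∈ G.neighborFinset u, 1 / (D + 1) :=
          Finset.sum_le_sum fun w _ => hm1 w
      _ = d u * (1 / (D + 1)) := hdcard u _
      _ ≤ D * (1 / (D + 1)) := mul_le_mul_of_nonneg_right (hdeg u) (by positivity)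
      _ = D / (D + 1) := by ring
  have hr0 : ∀ u, 1 / (D + 1) ≤ r u := by
    intro u
    have h1 : ∑ w ∈ G.neighborFinset u, z w ≤ D / (D + 1) :=
      le_trans (Finset.sum_le_sum fun w _ => hzm w) (hSm u)
    have h2 : D / (D + 1) + 1 / (D + 1) = 1 := by field_simp
    simp only [hr]; linarith
  have hrpos : ∀ u, 0 ≤ r u := fun u => le_trans (by positivity) (hr0 u)
  set Bf : (V → ℝ) → (V → ℝ) → ℝ := fun x y =>
    ∑ u : V, m u * x u * (y u + ∑ w ∈ G.neighborFinset u, m w * y w) with hBf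
  have hBexp : ∀ x y : V → ℝ, Bf x y = (∑ u : V, m u * x u * y u) +
      ∑ u : V, ∑ w ∈ G.neighborFinset u, (m u * x u) * (m w * y w) := by
    intro x y
    simp only [hBf]
    rw [← Finset.sum_add_distrib]
    refine Finset.sum_congr rfl fun u _ => ?_
    rw [mul_add, Finset.mul_sum]
  have hBsym : ∀ x y : V → ℝ, Bf x y = Bf y x := by
    intro x y
    rw [hBexp, hBexp]
    congr 1
    · exact Finset.sum_congr rfl fun u _ => by ring
    · rw [nbr_swap G (fun u w => (m u * x u) * (m w * y w))]
      exact Finset.sum_congr rfl fun u _ => Finset.sum_congr rfl fun w _ => by ring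
  have hinner_r : ∀ u, r u + ∑ w ∈ G.neighborFinset u, m w * r w = 1 := by
    intro u
    have h1 : ∑ w ∈ G.neighborFinset u, m w * r w = ∑ w ∈ G.neighborFinset u, z w :=
      Finset.sum_congr rfl fun w _ => (hzr w).symm
    rw [h1]; simp only [hr]; ring
  set T : ℝ := ∑ u : V, τ u with hT
  set Zs : ℝ := ∑ u : V, z u with hZs
  clear_value T Zs
  have hBrr : Bf r r = Zs := by
    simp only [hBf, hZs]
    refine Finset.sum_congr rfl fun u _ => ?_
    rw [hinner_r u, mul_one, ← hzr u]
  have hBσr : Bf σ r = T := by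
    simp only [hBf, hT]
    refine Finset.sum_congr rfl fun u _ => ?_
    rw [hinner_r u, mul_one]
  have hBrσ : Bf r σ = T := by rw [hBsym]; exact hBσr
  have hvanish : ∀ f : V → ℝ, ∑ u : V, ∑ w ∈ G.neighborFinset u, (f u - f w) = 0 := by
    intro f
    have h1 : ∑ u : V, ∑ w ∈ G.neighborFinset u, (f u - f w)
        = (∑ u : V, ∑ w ∈ G.neighborFinset u, f u)
          - ∑ u : V, ∑ w ∈ G.neighborFinset u, f w := by
      rw [← Finset.sum_sub_distrib]
      exact Finset.sum_congr rfl fun u _ => by rw [← Finset.sum_sub_distrib]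
    rw [h1, nbr_swap G (fun u w => f u), sub_self]
  have hquad : ∀ f : V → ℝ, 0 ≤ ∑ u : V, ∑ w ∈ G.neighborFinset u, (f u ^ 2 - f u * f w) := by
    intro f
    have h2 : ∑ u : V, ∑ w ∈ G.neighborFinset u, (f u ^ 2 - f u * f w)
        = (∑ u : V, ∑ w ∈ G.neighborFinset u, ((f u - f w) ^ 2) / 2)
          + ∑ u : V, ∑ w ∈ G.neighborFinset u, ((f u ^ 2 - f w ^ 2) / 2) := by
      rw [← Finset.sum_add_distrib]
      refine Finset.sum_congr rfl fun u _ => ?_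
      rw [← Finset.sum_add_distrib]
      exact Finset.sum_congr rfl fun w _ => by ring
    have h3 : ∑ u : V, ∑ w ∈ G.neighborFinset u, ((f u ^ 2 - f w ^ 2) / 2) = 0 := by
      have h4 := hvanish (fun u => f u ^ 2 / 2)
      rw [← h4]
      exact Finset.sum_congr rfl fun u _ => Finset.sum_congr rfl fun w _ => by ring
    rw [h2, h3, add_zero]
    exact Finset.sum_nonneg fun u _ => Finset.sum_nonneg fun w _ =>
      div_nonneg (sq_nonneg _) (by norm_num)
  have hBσσ : Bf σ σ ≤ T := by
    have hterm : ∀ u, τ u - m u * σ u * (σ u + ∑ w ∈ G.neighborFinset u, m w * σ w)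
        = ∑ w ∈ G.neighborFinset u, (τ u ^ 2 - τ u * τ w) := by
      intro u
      rw [Finset.sum_sub_distrib, hdcard u (τ u ^ 2), ← Finset.mul_sum]
      have h1 : ∑ w ∈ G.neighborFinset u, τ w = ∑ w ∈ G.neighborFinset u, m w * σ w :=
        Finset.sum_congr rfl fun w _ => rfl
      rw [h1]
      have hne : (1 + d u * m u) ≠ 0 := (hdenom u).ne'
      simp only [hτ, hσ]
      have hs := hσ1 u
      simp only [hσ] at hs
      linear_combination (-(m u * (1 / (1 + d u * m u)))) * hs
    have h5 : T - Bf σ σ = ∑ u : V, ∑ w ∈ G.neighborFinset u, (τ u ^ 2 - τ u * τ w) := by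
      simp only [hT, hBf]
      rw [← Finset.sum_sub_distrib]
      exact Finset.sum_congr rfl fun u _ => hterm u
    have h6 := hquad τ
    linarith [h5 ▸ h6]
  have hpsd : ∀ x : V → ℝ, 0 ≤ Bf x x := by
    intro x
    have hstep1 : ∀ u, (d u + 1) * (m u * x u) ^ 2 ≤ m u * x u * x u := by
      intro u
      have h1 : (d u + 1) * m u ≤ 1 := by
        have h2 : m u ≤ 1 / (D + 1) := hm1 u
        have h3 : d u + 1 ≤ D + 1 := by have := hdeg u; simp only [hd]; linarith
        calc (d u + 1) * m u ≤ (D + 1) * m u :=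
              mul_le_mul_of_nonneg_right h3 (hm0 u)
          _ ≤ (D + 1) * (1 / (D + 1)) := mul_le_mul_of_nonneg_left h2 (by linarith)
          _ = 1 := by field_simp
      have h4 : (d u + 1) * (m u * x u) ^ 2 = ((d u + 1) * m u) * (m u * x u ^ 2) := by ring
      have h5 : m u * x u * x u = 1 * (m u * x u ^ 2) := by ring
      rw [h4, h5]
      exact mul_le_mul_of_nonneg_right h1 (mul_nonneg (hm0 u) (sq_nonneg _))
    have hstep2 : 0 ≤ ∑ u : V, ∑ w ∈ G.neighborFinset u,
        ((m u * x u) ^ 2 + (m u * x u) * (m w * x w)) := by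
      have h2 : ∑ u : V, ∑ w ∈ G.neighborFinset u,
            ((m u * x u) ^ 2 + (m u * x u) * (m w * x w))
          = (∑ u : V, ∑ w ∈ G.neighborFinset u, ((m u * x u + m w * x w) ^ 2) / 2)
            + ∑ u : V, ∑ w ∈ G.neighborFinset u,
              (((m u * x u) ^ 2 - (m w * x w) ^ 2) / 2) := by
        rw [← Finset.sum_add_distrib]
        refine Finset.sum_congr rfl fun u _ => ?_
        rw [← Finset.sum_add_distrib]
        exact Finset.sum_congr rfl fun w _ => by ring
      have h3 : ∑ u : V, ∑ w ∈ G.neighborFinset u,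
          (((m u * x u) ^ 2 - (m w * x w) ^ 2) / 2) = 0 := by
        have h4 := hvanish (fun u => (m u * x u) ^ 2 / 2)
        rw [← h4]
        exact Finset.sum_congr rfl fun u _ => Finset.sum_congr rfl fun w _ => by ring
      rw [h2, h3, add_zero]
      exact Finset.sum_nonneg fun u _ => Finset.sum_nonneg fun w _ =>
        div_nonneg (sq_nonneg _) (by norm_num)
    have hP : ∑ u : V, ∑ w ∈ G.neighborFinset u,
          ((m u * x u) ^ 2 + (m u * x u) * (m w * x w))
        = (∑ u : V, d u * (m u * x u) ^ 2)
          + ∑ u : V, ∑ w ∈ G.neighborFinset u, (m u * x u) * (m w * x w) := by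
      rw [← Finset.sum_add_distrib]
      refine Finset.sum_congr rfl fun u _ => ?_
      rw [Finset.sum_add_distrib, hdcard u ((m u * x u) ^ 2)]
    have hA1 : ∑ u : V, (d u + 1) * (m u * x u) ^ 2 ≤ ∑ u : V, m u * x u * x u :=
      Finset.sum_le_sum fun u _ => hstep1 u
    have hsplit : ∑ u : V, (d u + 1) * (m u * x u) ^ 2
        = (∑ u : V, d u * (m u * x u) ^ 2) + ∑ u : V, (m u * x u) ^ 2 := by
      rw [← Finset.sum_add_distrib]
      exact Finset.sum_congr rfl fun u _ => by ring
    have hg2 : 0 ≤ ∑ u : V, (m u * x u) ^ 2 :=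
      Finset.sum_nonneg fun u _ => sq_nonneg _
    rw [hBexp]
    linarith
  set y : V → ℝ := fun u => Zs * σ u - T * r u with hy
  have hSy : ∀ u, ∑ w ∈ G.neighborFinset u, m w * y w
      = Zs * (∑ w ∈ G.neighborFinset u, m w * σ w)
        - T * (∑ w ∈ G.neighborFinset u, m w * r w) := by
    intro u
    rw [Finset.mul_sum, Finset.mul_sum, ← Finset.sum_sub_distrib]
    exact Finset.sum_congr rfl fun w _ => by simp only [hy]; ring
  have hByy : Bf y y = Zs ^ 2 * Bf σ σ - Zs * T * Bf σ r - T * Zs * Bf r σ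
      + T ^ 2 * Bf r r := by
    simp only [hBf, Finset.mul_sum, ← Finset.sum_sub_distrib, ← Finset.sum_add_distrib]
    refine Finset.sum_congr rfl fun u _ => ?_
    rw [hSy u]
    simp only [hy]
    ring
  have hZs0 : 0 ≤ Zs := hZs ▸ Finset.sum_nonneg fun u _ => hz0 u
  have hT0 : (0:ℝ) ≤ T := hT ▸ Finset.sum_nonneg fun u _ => hτ0 u
  have hfinal : 0 ≤ Zs * T * (Zs - T) := by
    have h0 : 0 ≤ Bf y y := hpsd y
    have h1 : Zs ^ 2 * Bf σ σ ≤ Zs ^ 2 * T := mul_le_mul_of_nonneg_left hBσσ (by positivity)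
    rw [hByy, hBσr, hBrσ, hBrr] at h0
    nlinarith
  have hZT : T ≤ Zs := by
    rcases eq_or_lt_of_le hT0 with h | h
    · linarith
    · have hZsT : T / (D + 1) ≤ Zs := by
        rw [hZs, hT, Finset.sum_div]
        refine Finset.sum_le_sum fun u _ => ?_
        calc τ u / (D + 1) = τ u * (1 / (D + 1)) := by ring
          _ ≤ m u * (1 / (D + 1)) := mul_le_mul_of_nonneg_right (hτm u) (by positivity)
          _ ≤ m u * r u := mul_le_mul_of_nonneg_left (hr0 u) (hm0 u)
          _ = z u := (hzr u).symm
      have hZspos : 0 < Zs := lt_of_lt_of_le (by positivity) hZsT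
      by_contra hcon
      push_neg at hcon
      have : Zs * T * (Zs - T) < 0 :=
        mul_neg_of_pos_of_neg (by positivity) (by linarith)
      linarith
  refine le_trans (le_of_eq ?_) hZT
  rw [hT]


lemma exists_z (D : ℝ) (hD : 1 ≤ D) (hdeg : ∀ u, (G.degree u : ℝ) ≤ D)
    (m : V → ℝ) (hm0 : ∀ u, 0 ≤ m u) (hm1 : ∀ u, m u ≤ 1 / (D + 1)) :
    ∃ z : V → ℝ, (∀ u, z u = m u * (1 - ∑ w ∈ G.neighborFinset u, z w)) ∧
      (∀ u, 0 ≤ z u) ∧ (∀ u, z u ≤ m u) := by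
  have hD0 : (0:ℝ) < D := lt_of_lt_of_le one_pos hD
  have hD10 : (0:ℝ) < D + 1 := by linarith
  set F : (V → ℝ) → (V → ℝ) := fun x u => m u * (1 - ∑ w ∈ G.neighborFinset u, x w) with hF
  set K : NNReal := ⟨D / (D + 1), by positivity⟩ with hKdef
  have hKcoe : (K : ℝ) = D / (D + 1) := rfl
  have hK1 : K < 1 := by
    rw [← NNReal.coe_lt_coe, hKcoe, NNReal.coe_one]
    rw [div_lt_one hD10]; linarith
  have hLip : LipschitzWith K F := by
    refine LipschitzWith.of_dist_le_mul fun x y => ?_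
    refine (dist_pi_le_iff (by positivity)).2 fun u => ?_
    have hdiff : F x u - F y u = m u * (∑ w ∈ G.neighborFinset u, (y w - x w)) := by
      simp only [hF]
      rw [Finset.sum_sub_distrib]; ring
    rw [Real.dist_eq, hdiff, abs_mul, abs_of_nonneg (hm0 u)]
    have h1 : |∑ w ∈ G.neighborFinset u, (y w - x w)| ≤ (G.degree u : ℝ) * dist x y := by
      calc |∑ w ∈ G.neighborFinset u, (y w - x w)| ≤ ∑ w ∈ G.neighborFinset u, |y w - x w| :=
            Finset.abs_sum_le_sum_abs _ _
        _ ≤ ∑ _w ∈ G.neighborFinset u, dist x y := by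
            refine Finset.sum_le_sum fun w _ => ?_
            rw [abs_sub_comm, ← Real.dist_eq]
            exact dist_le_pi_dist x y w
        _ = (G.degree u : ℝ) * dist x y := by
            rw [Finset.sum_const, nsmul_eq_mul, G.card_neighborFinset_eq_degree]
    calc m u * |∑ w ∈ G.neighborFinset u, (y w - x w)| ≤ m u * ((G.degree u : ℝ) * dist x y) :=
          mul_le_mul_of_nonneg_left h1 (hm0 u)
      _ ≤ (K : ℝ) * dist x y := by
          rw [hKcoe, ← mul_assoc]
          refine mul_le_mul_of_nonneg_right ?_ dist_nonneg
          calc m u * (G.degree u : ℝ) ≤ (1 / (D + 1)) * D := by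
                refine mul_le_mul (hm1 u) (hdeg u) (by positivity) (by positivity)
            _ = D / (D + 1) := by ring
  have hC : ContractingWith K F := ⟨hK1, hLip⟩
  set z : V → ℝ := hC.fixedPoint F with hzdef
  have hfix : F z = z := hC.fixedPoint_isFixedPt
  have hinv : ∀ x : V → ℝ, (∀ u, 0 ≤ x u ∧ x u ≤ m u) → (∀ u, 0 ≤ F x u ∧ F x u ≤ m u) := by
    intro x hx u
    have hS0 : 0 ≤ ∑ w ∈ G.neighborFinset u, x w :=
      Finset.sum_nonneg fun w _ => (hx w).1
    have hS1 : ∑ w ∈ G.neighborFinset u, x w ≤ 1 := by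
      calc ∑ w ∈ G.neighborFinset u, x w ≤ ∑ _w ∈ G.neighborFinset u, 1 / (D + 1) :=
            Finset.sum_le_sum fun w _ => le_trans (hx w).2 (hm1 w)
        _ = (G.degree u : ℝ) * (1 / (D + 1)) := by
            rw [Finset.sum_const, nsmul_eq_mul, G.card_neighborFinset_eq_degree]
        _ ≤ D * (1 / (D + 1)) := mul_le_mul_of_nonneg_right (hdeg u) (by positivity)
        _ ≤ 1 := by rw [mul_one_div, div_le_one hD10]; linarith
    constructor
    · exact mul_nonneg (hm0 u) (by linarith)
    · calc m u * (1 - ∑ w ∈ G.neighborFinset u, x w) ≤ m u * 1 :=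
          mul_le_mul_of_nonneg_left (by linarith) (hm0 u)
        _ = m u := mul_one _
  have hiter : ∀ n : ℕ, ∀ u, 0 ≤ (F^[n] 0) u ∧ (F^[n] 0) u ≤ m u := by
    intro n
    induction n with
    | zero => intro u; simp [hm0 u]
    | succ n ih => rw [Function.iterate_succ_apply']; exact hinv _ ih
  have htend := hC.tendsto_iterate_fixedPoint (0 : V → ℝ)
  have hcoord : ∀ u, Filter.Tendsto (fun n => (F^[n] 0) u) Filter.atTop (nhds (z u)) :=
    fun u => (tendsto_pi_nhds.1 htend) u
  refine ⟨z, fun u => (congrFun hfix u).symm, fun u => ?_, fun u => ?_⟩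
  · exact ge_of_tendsto' (hcoord u) fun n => (hiter n u).1
  · exact le_of_tendsto' (hcoord u) fun n => (hiter n u).2


def IS : Finset (Finset V) := Finset.univ.filter (fun s => ∀ v ∈ s, ∀ w ∈ s, ¬ G.Adj v w)

def wt (s : Finset V) : ℝ := ∏ v ∈ s, lam v

def Zf : ℝ := ∑ s ∈ IS G, wt lam s

def Af (u : V) : ℝ := ∑ s ∈ (IS G).filter (fun s => u ∈ s), wt lam s

def Bfc (u : V) : ℝ :=
  ∑ s ∈ (IS G).filter (fun s => u ∉ s ∧ ∀ x ∈ s, ¬ G.Adj u x), wt lam s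

lemma mem_IS {s : Finset V} : s ∈ IS G ↔ ∀ v ∈ s, ∀ w ∈ s, ¬ G.Adj v w := by
  simp [IS]

lemma wt_nonneg (hl0 : ∀ v, 0 ≤ lam v) (s : Finset V) : 0 ≤ wt lam s :=
  Finset.prod_nonneg fun v _ => hl0 v

lemma Zf_pos (hl0 : ∀ v, 0 ≤ lam v) : 0 < Zf G lam := by
  have hempty : (∅ : Finset V) ∈ IS G := by simp [mem_IS]
  have h1 : wt lam (∅ : Finset V) = 1 := by simp [wt]
  have h2 : wt lam (∅ : Finset V) ≤ Zf G lam :=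
    Finset.single_le_sum (f := fun s => wt lam s) (fun s _ => wt_nonneg lam hl0 s) hempty
  rw [h1] at h2
  linarith

lemma sum_card : ∑ s ∈ IS G, (s.card : ℝ) * wt lam s = ∑ u : V, Af G lam u := by
  have h1 : ∀ s : Finset V, (s.card : ℝ) * wt lam s
      = ∑ u : V, if u ∈ s then wt lam s else 0 := by
    intro s
    rw [Finset.sum_ite_mem, Finset.univ_inter, Finset.sum_const, nsmul_eq_mul]
  rw [Finset.sum_congr rfl fun s _ => h1 s, Finset.sum_comm]
  exact Finset.sum_congr rfl fun u _ => (Finset.sum_filter _ _).symm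

lemma AB (u : V) : Af G lam u = lam u * Bfc G lam u := by
  unfold Af Bfc
  rw [Finset.mul_sum]
  have hi : ∀ s ∈ (IS G).filter (fun s => u ∈ s),
      s.erase u ∈ (IS G).filter (fun s => u ∉ s ∧ ∀ x ∈ s, ¬ G.Adj u x) := by
    intro s hs
    rw [Finset.mem_filter] at hs ⊢
    obtain ⟨hsIS, hus⟩ := hs
    rw [mem_IS] at hsIS
    exact ⟨(mem_IS G).2 fun v hv w hw => hsIS v (Finset.mem_of_mem_erase hv) w
      (Finset.mem_of_mem_erase hw), Finset.notMem_erase u s, fun x hx =>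
      hsIS u hus x (Finset.mem_of_mem_erase hx)⟩
  have hj : ∀ t ∈ (IS G).filter (fun s => u ∉ s ∧ ∀ x ∈ s, ¬ G.Adj u x),
      insert u t ∈ (IS G).filter (fun s => u ∈ s) := by
    intro t ht
    rw [Finset.mem_filter] at ht ⊢
    obtain ⟨htIS, hut, havoid⟩ := ht
    rw [mem_IS] at htIS
    refine ⟨(mem_IS G).2 ?_, Finset.mem_insert_self u t⟩
    intro v hv w hw
    rcases Finset.mem_insert.1 hv with hvu | hv'
    · rcases Finset.mem_insert.1 hw with hwu | hw'
      · rw [hvu, hwu]; exact fun h => G.irrefl h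
      · rw [hvu]; exact havoid w hw'
    · rcases Finset.mem_insert.1 hw with hwu | hw'
      · rw [hwu]; intro hadj; exact havoid v hv' (G.adj_symm hadj)
      · exact htIS v hv' w hw'
  have hleft : ∀ s ∈ (IS G).filter (fun s => u ∈ s), insert u (s.erase u) = s := by
    intro s hs
    rw [Finset.mem_filter] at hs
    exact Finset.insert_erase hs.2
  have hright : ∀ t ∈ (IS G).filter (fun s => u ∉ s ∧ ∀ x ∈ s, ¬ G.Adj u x),
      (insert u t).erase u = t := by
    intro t ht
    rw [Finset.mem_filter] at ht
    exact Finset.erase_insert ht.2.1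
  have hvalue : ∀ s ∈ (IS G).filter (fun s => u ∈ s),
      wt lam s = lam u * wt lam (s.erase u) := by
    intro s hs
    rw [Finset.mem_filter] at hs
    exact (Finset.mul_prod_erase s lam hs.2).symm
  exact Finset.sum_bij' (fun s _ => s.erase u) (fun t _ => insert u t)
    hi hj hleft hright hvalue

lemma cover (hl0 : ∀ v, 0 ≤ lam v) (u : V) :
    Zf G lam ≤ Bfc G lam u + (Af G lam u + ∑ w ∈ G.neighborFinset u, Af G lam w) := by
  classical
  set P : Finset V → Prop := fun s => u ∉ s ∧ ∀ x ∈ s, ¬ G.Adj u x with hP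
  have hsplit : Zf G lam = (∑ s ∈ (IS G).filter P, wt lam s)
      + ∑ s ∈ (IS G).filter (fun s => ¬ P s), wt lam s :=
    (Finset.sum_filter_add_sum_filter_not (IS G) P _).symm
  have hB : (∑ s ∈ (IS G).filter P, wt lam s) = Bfc G lam u := rfl
  have hbound : ∑ s ∈ (IS G).filter (fun s => ¬ P s), wt lam s
      ≤ ∑ x ∈ insert u (G.neighborFinset u), Af G lam x := by
    have hstep : ∀ s ∈ (IS G).filter (fun s => ¬ P s),
        wt lam s ≤ ∑ x ∈ insert u (G.neighborFinset u), (if x ∈ s then wt lam s else 0) := by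
      intro s hs
      rw [Finset.mem_filter] at hs
      obtain ⟨hsIS, hnP⟩ := hs
      simp only [hP] at hnP
      push_neg at hnP
      have hwit : ∃ x ∈ insert u (G.neighborFinset u), x ∈ s := by
        by_cases hus : u ∈ s
        · exact ⟨u, Finset.mem_insert_self _ _, hus⟩
        · obtain ⟨x, hxs, hadj⟩ := hnP hus
          exact ⟨x, Finset.mem_insert_of_mem ((G.mem_neighborFinset u x).2 hadj), hxs⟩
      obtain ⟨x0, hx0mem, hx0s⟩ := hwit
      have hnn : ∀ x ∈ insert u (G.neighborFinset u), 0 ≤ (if x ∈ s then wt lam s else 0) := by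
        intro x _
        by_cases hxs : x ∈ s
        · rw [if_pos hxs]; exact wt_nonneg lam hl0 s
        · rw [if_neg hxs]
      have hval := Finset.single_le_sum hnn hx0mem
      rw [if_pos hx0s] at hval
      exact hval
    calc ∑ s ∈ (IS G).filter (fun s => ¬ P s), wt lam s
        ≤ ∑ s ∈ (IS G).filter (fun s => ¬ P s),
            ∑ x ∈ insert u (G.neighborFinset u), (if x ∈ s then wt lam s else 0) :=
          Finset.sum_le_sum hstep
      _ = ∑ x ∈ insert u (G.neighborFinset u),
            ∑ s ∈ (IS G).filter (fun s => ¬ P s), (if x ∈ s then wt lam s else 0) :=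
          Finset.sum_comm
      _ ≤ ∑ x ∈ insert u (G.neighborFinset u), Af G lam x := by
          refine Finset.sum_le_sum fun x _ => ?_
          rw [← Finset.sum_filter]
          exact Finset.sum_le_sum_of_subset_of_nonneg
            (Finset.filter_subset_filter _ (Finset.filter_subset _ _))
            (fun s _ _ => wt_nonneg lam hl0 s)
  have hins : ∑ x ∈ insert u (G.neighborFinset u), Af G lam x
      = Af G lam u + ∑ w ∈ G.neighborFinset u, Af G lam w :=
    Finset.sum_insert (G.notMem_neighborFinset_self u)
  rw [hsplit, hB]
  rw [hins] at hbound
  linarith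


lemma key (hl0 : ∀ v, 0 ≤ lam v) (u : V) :
    (lam u / (1 + lam u)) * Zf G lam
      ≤ Af G lam u + (lam u / (1 + lam u)) * ∑ w ∈ G.neighborFinset u, Af G lam w := by
  have h1 : (0:ℝ) < 1 + lam u := by have := hl0 u; linarith
  have hcov := cover G lam hl0 u
  have hAB := AB G lam u
  set S : ℝ := ∑ w ∈ G.neighborFinset u, Af G lam w with hS
  have h2 : lam u * Zf G lam ≤ (1 + lam u) * Af G lam u + lam u * S := by
    have h3 := mul_le_mul_of_nonneg_left hcov (hl0 u)
    have h4 : lam u * (Bfc G lam u + (Af G lam u + S))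
        = lam u * Bfc G lam u + lam u * Af G lam u + lam u * S := by ring
    rw [h4, ← hAB] at h3
    linarith
  have hgoal : (lam u / (1 + lam u)) * Zf G lam * (1 + lam u)
      ≤ (Af G lam u + (lam u / (1 + lam u)) * S) * (1 + lam u) := by
    have e1 : (lam u / (1 + lam u)) * Zf G lam * (1 + lam u) = lam u * Zf G lam := by
      field_simp
    have e2 : (Af G lam u + (lam u / (1 + lam u)) * S) * (1 + lam u)
        = (1 + lam u) * Af G lam u + lam u * S := by
      field_simp
    rw [e1, e2]
    exact h2
  exact le_of_mul_le_mul_right hgoal h1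

lemma claim1 (hl0 : ∀ v, 0 ≤ lam v)
    (m : V → ℝ) (hmdef : ∀ u, m u = lam u / (1 + lam u))
    (z : V → ℝ) (hz : ∀ u, z u = m u * (1 - ∑ w ∈ G.neighborFinset u, z w))
    (hr0 : ∀ u, 0 ≤ 1 - ∑ w ∈ G.neighborFinset u, z w) :
    Zf G lam * (∑ u : V, z u) ≤ ∑ u : V, Af G lam u := by
  have hkey : ∀ u, m u * Zf G lam
      ≤ Af G lam u + m u * ∑ w ∈ G.neighborFinset u, Af G lam w := by
    intro u
    rw [hmdef u]
    exact key G lam hl0 u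
  have hstep1 : ∀ u, Zf G lam * z u
      ≤ (Af G lam u + m u * ∑ w ∈ G.neighborFinset u, Af G lam w)
        * (1 - ∑ w ∈ G.neighborFinset u, z w) := by
    intro u
    calc Zf G lam * z u
        = (m u * Zf G lam) * (1 - ∑ w ∈ G.neighborFinset u, z w) := by rw [hz u]; ring
      _ ≤ (Af G lam u + m u * ∑ w ∈ G.neighborFinset u, Af G lam w)
            * (1 - ∑ w ∈ G.neighborFinset u, z w) :=
          mul_le_mul_of_nonneg_right (hkey u) (hr0 u)
  have hsum1 : Zf G lam * (∑ u : V, z u) ≤ ∑ u : V,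
      (Af G lam u + m u * ∑ w ∈ G.neighborFinset u, Af G lam w)
        * (1 - ∑ w ∈ G.neighborFinset u, z w) := by
    rw [Finset.mul_sum]
    exact Finset.sum_le_sum fun u _ => hstep1 u
  have hid : ∀ u, (Af G lam u + m u * ∑ w ∈ G.neighborFinset u, Af G lam w)
        * (1 - ∑ w ∈ G.neighborFinset u, z w)
      = Af G lam u * (1 - ∑ w ∈ G.neighborFinset u, z w)
        + z u * ∑ w ∈ G.neighborFinset u, Af G lam w := by
    intro u
    rw [hz u]
    ring
  have hswap : ∑ u : V, z u * ∑ w ∈ G.neighborFinset u, Af G lam w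
      = ∑ u : V, Af G lam u * ∑ w ∈ G.neighborFinset u, z w := by
    have h1 : ∑ u : V, z u * ∑ w ∈ G.neighborFinset u, Af G lam w
        = ∑ u : V, ∑ w ∈ G.neighborFinset u, z u * Af G lam w :=
      Finset.sum_congr rfl fun u _ => Finset.mul_sum _ _ _
    have h2 : ∑ u : V, Af G lam u * ∑ w ∈ G.neighborFinset u, z w
        = ∑ u : V, ∑ w ∈ G.neighborFinset u, z w * Af G lam u := by
      refine Finset.sum_congr rfl fun u _ => ?_
      rw [Finset.mul_sum]
      exact Finset.sum_congr rfl fun w _ => by ring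
    rw [h1, h2]
    exact nbr_swap G (fun u w => z u * Af G lam w)
  calc Zf G lam * (∑ u : V, z u)
      ≤ ∑ u : V, (Af G lam u + m u * ∑ w ∈ G.neighborFinset u, Af G lam w)
          * (1 - ∑ w ∈ G.neighborFinset u, z w) := hsum1
    _ = (∑ u : V, Af G lam u * (1 - ∑ w ∈ G.neighborFinset u, z w))
        + ∑ u : V, z u * ∑ w ∈ G.neighborFinset u, Af G lam w := by
        rw [← Finset.sum_add_distrib]
        exact Finset.sum_congr rfl fun u _ => hid u
    _ = (∑ u : V, Af G lam u * (1 - ∑ w ∈ G.neighborFinset u, z w))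
        + ∑ u : V, Af G lam u * ∑ w ∈ G.neighborFinset u, z w := by rw [hswap]
    _ = ∑ u : V, Af G lam u := by
        rw [← Finset.sum_add_distrib]
        exact Finset.sum_congr rfl fun u _ => by ring

end MultivarOcc

open MultivarOcc

/-- Multivariate lower bound on the expected size of an independent set in the
hard-core model, in terms of the degree sequence, for fugacities below `1/Δ`. -/
theorem multivar_occupancy_lower_bound {V : Type*} [Fintype V] [DecidableEq V]
    (G : SimpleGraph V) [DecidableRel G.Adj] (lam : V → ℝ)
    (hlam0 : ∀ v, 0 ≤ lam v) (hlam : ∀ v, lam v < 1 / (G.maxDegree : ℝ)) :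
    let indepSets : Finset (Finset V) :=
      Finset.univ.filter (fun s => ∀ v ∈ s, ∀ w ∈ s, ¬ G.Adj v w)
    let Z : ℝ := ∑ s ∈ indepSets, ∏ v ∈ s, lam v
    (∑ s ∈ indepSets, (s.card : ℝ) * ∏ v ∈ s, lam v) / Z ≥
      ∑ u : V, lam u / (1 + ((G.degree u : ℝ) + 1) * lam u) := by
  intro indepSets Z
  rw [ge_iff_le]
  by_cases hne : Nonempty V
  · obtain ⟨v0⟩ := hne
    have hΔpos : 0 < G.maxDegree := by
      by_contra h
      push_neg at h
      have h0 : G.maxDegree = 0 := Nat.le_zero.1 h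
      have h1 := hlam v0
      rw [h0] at h1
      norm_num at h1
      exact absurd h1 (not_lt.2 (hlam0 v0))
    have hD1 : (1:ℝ) ≤ (G.maxDegree : ℝ) := by exact_mod_cast hΔpos
    set D : ℝ := (G.maxDegree : ℝ) with hDdef
    have hD0 : (0:ℝ) < D := by linarith
    have hdeg : ∀ u, (G.degree u : ℝ) ≤ D := fun u =>
      Nat.cast_le.2 (G.degree_le_maxDegree u)
    set m : V → ℝ := fun u => lam u / (1 + lam u) with hm
    have hpl : ∀ u, (0:ℝ) < 1 + lam u := fun u => by have := hlam0 u; linarith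
    have hm0 : ∀ u, 0 ≤ m u := fun u => div_nonneg (hlam0 u) (hpl u).le
    have hm1 : ∀ u, m u ≤ 1 / (D + 1) := by
      intro u
      have hlt : lam u * D < 1 := by
        have h := hlam u
        rw [lt_div_iff₀ hD0] at h
        exact h
      have hD10 : (0:ℝ) < D + 1 := by linarith
      simp only [hm]
      rw [div_le_div_iff₀ (hpl u) hD10]
      have hexp : lam u * (D + 1) = lam u * D + lam u := by ring
      linarith
    obtain ⟨z, hzfix, hz0, hzm⟩ := exists_z G D hD1 hdeg m hm0 hm1
    have hZpos : 0 < Zf G lam := Zf_pos G lam hlam0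
    have hr0 : ∀ u, 0 ≤ 1 - ∑ w ∈ G.neighborFinset u, z w := by
      intro u
      have hS1 : ∑ w ∈ G.neighborFinset u, z w ≤ 1 := by
        calc ∑ w ∈ G.neighborFinset u, z w ≤ ∑ _w ∈ G.neighborFinset u, 1 / (D + 1) :=
              Finset.sum_le_sum fun w _ => le_trans (hzm w) (hm1 w)
          _ = (G.degree u : ℝ) * (1 / (D + 1)) := by
              rw [Finset.sum_const, nsmul_eq_mul, G.card_neighborFinset_eq_degree]
          _ ≤ D * (1 / (D + 1)) := mul_le_mul_of_nonneg_right (hdeg u) (by positivity)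
          _ ≤ 1 := by rw [mul_one_div, div_le_one (by linarith)]; linarith
      linarith
    have hclaim1 := claim1 G lam hlam0 m (fun u => rfl) z hzfix hr0
    have hanalytic := sum_z_ge G D hD1 hdeg m hm0 hm1 z hzfix hz0 hzm
    have hRHS : ∑ u : V, lam u / (1 + ((G.degree u : ℝ) + 1) * lam u)
        = ∑ u : V, m u * (1 / (1 + (G.degree u : ℝ) * m u)) := by
      refine Finset.sum_congr rfl fun u _ => ?_
      have h1 : (0:ℝ) < 1 + lam u := hpl u
      have h2 : (0:ℝ) ≤ (G.degree u : ℝ) := Nat.cast_nonneg _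
      have h3 : (0:ℝ) < 1 + ((G.degree u : ℝ) + 1) * lam u := by
        have := mul_nonneg (by linarith : (0:ℝ) ≤ (G.degree u : ℝ) + 1) (hlam0 u)
        linarith
      have h4 : (0:ℝ) < 1 + (G.degree u : ℝ) * m u := by
        have := mul_nonneg h2 (hm0 u)
        linarith
      have hne1 : (1 + lam u) ≠ 0 := ne_of_gt h1
      have hne3 : (1 + ((G.degree u : ℝ) + 1) * lam u) ≠ 0 := ne_of_gt h3
      have hkey : 1 + (G.degree u : ℝ) * (lam u / (1 + lam u))
          = (1 + ((G.degree u : ℝ) + 1) * lam u) / (1 + lam u) := by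
        field_simp
        ring
      simp only [hm]
      rw [hkey, one_div_div, div_mul_div_comm]
      rw [div_eq_div_iff hne3 (mul_ne_zero hne1 hne3)]
      ring
    calc ∑ u : V, lam u / (1 + ((G.degree u : ℝ) + 1) * lam u)
        = ∑ u : V, m u * (1 / (1 + (G.degree u : ℝ) * m u)) := hRHS
      _ ≤ ∑ u : V, z u := hanalytic
      _ ≤ (∑ u : V, Af G lam u) / Zf G lam := by
          rw [le_div_iff₀ hZpos]
          calc (∑ u : V, z u) * Zf G lam = Zf G lam * ∑ u : V, z u := by ring
            _ ≤ ∑ u : V, Af G lam u := hclaim1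
      _ = (∑ s ∈ indepSets, (s.card : ℝ) * ∏ v ∈ s, lam v) / Z := by
          rw [← sum_card G lam]
          rfl
  · have hempty : IsEmpty V := not_nonempty_iff.1 hne
    have huniv : (Finset.univ : Finset V) = ∅ := Finset.univ_eq_empty
    rw [huniv, Finset.sum_empty]
    refine div_nonneg (Finset.sum_nonneg fun s _ => ?_) (Finset.sum_nonneg fun s _ => ?_)
    · exact mul_nonneg (Nat.cast_nonneg _) (Finset.prod_nonneg fun v _ => hlam0 v)
    · exact Finset.prod_nonneg fun v _ => hlam0 v
end

section
/- Let G be a finite graph with no isolated vertices, A its adjacency matrix, and B = diag(β), Γ = diag(γ) with all β_u, γ_u > 0. Suppose d_u γ_u/β_u < 1 for all u and Σ_{v∈N(u)} γ_v/β_v ≤ 1 for all u. Then the vector y' = (B + AΓ)^{-1}·1 is entrywise nonnegative. -/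
open Finset Matrix

lemma le_zero_of_forall_le_pow_mul {q K a : ℝ} (hq0 : 0 ≤ q) (hq1 : q < 1)
    (h : ∀ n : ℕ, a ≤ q ^ n * K) : a ≤ 0 := by
  by_contra h'
  push_neg at h'
  have ht : Filter.Tendsto (fun n : ℕ => q ^ n * K) Filter.atTop (nhds 0) := by
    simpa using (tendsto_pow_atTop_nhds_zero_of_lt_one hq0 hq1).mul_const K
  obtain ⟨n, hn⟩ := ((ht.eventually (gt_mem_nhds h')).exists)
  exact absurd (h n) (not_le.mpr hn)

/-- Under the local occupancy parameter conditions, `(B + AΓ)⁻¹ 1` is entrywise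
nonnegative. -/
theorem dual_solution_nonneg {V : Type*} [Fintype V] [DecidableEq V]
    (G : SimpleGraph V) [DecidableRel G.Adj]
    (hiso : ∀ v, 0 < G.degree v)
    (β γ : V → ℝ) (hβ : ∀ v, 0 < β v) (hγ : ∀ v, 0 < γ v)
    (hd : ∀ v, (G.degree v : ℝ) * γ v / β v < 1)
    (hsum : ∀ u, ∑ v ∈ G.neighborFinset u, γ v / β v ≤ 1) :
    let A : Matrix V V ℝ := G.adjMatrix ℝ
    let B : Matrix V V ℝ := Matrix.diagonal β
    let Γ : Matrix V V ℝ := Matrix.diagonal γ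
    ∀ u : V, 0 ≤ ((B + A * Γ)⁻¹ *ᵥ (fun _ => (1 : ℝ))) u := by
  intro A B Γ u
  set c : V → ℝ := fun v => γ v / β v with hc
  have hc0 : ∀ v, 0 < c v := fun v => div_pos (hγ v) (hβ v)
  set C : Matrix V V ℝ := A * Matrix.diagonal c with hCdef
  have hCapp : ∀ x v, C x v = if G.Adj x v then c v else 0 := by
    intro x v
    simp [hCdef, Matrix.mul_diagonal, A, SimpleGraph.adjMatrix_apply, ite_mul]
  have hC0 : ∀ x v, 0 ≤ C x v := by
    intro x v; rw [hCapp]; split <;> [exact (hc0 v).le; rfl]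
  have nonemp : Finset.univ.Nonempty (α := V) := ⟨u, mem_univ u⟩
  set q : ℝ := Finset.univ.sup' nonemp (fun v => (G.degree v : ℝ) * c v) with hqdef
  have hq1 : q < 1 := by
    rw [hqdef, Finset.sup'_lt_iff]
    intro v _
    have := hd v
    rwa [mul_div_assoc] at this
  have hq0 : 0 ≤ q := by
    exact le_trans (mul_nonneg (Nat.cast_nonneg _) (hc0 u).le)
      (Finset.le_sup' (f := fun v => (G.degree v : ℝ) * c v) (mem_univ u))
  have colsum : ∀ v, ∑ x, C x v ≤ q := by
    intro v
    have h2 : ∑ x, C x v = (G.degree v : ℝ) * c v := by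
      simp only [hCapp]
      have h1 : ∀ x ∈ Finset.univ (α := V),
          (if G.Adj x v then c v else 0) = (if G.Adj v x then c v else 0) :=
        fun x _ => if_congr (G.adj_comm x v) rfl rfl
      rw [Finset.sum_congr rfl h1, ← Finset.sum_filter, Finset.sum_const, nsmul_eq_mul]
      congr 1
      rw [← SimpleGraph.card_neighborFinset_eq_degree, SimpleGraph.neighborFinset_eq_filter]
    rw [h2]
    exact Finset.le_sup' (f := fun v => (G.degree v : ℝ) * c v) (mem_univ v)
  have hCpow0 : ∀ n : ℕ, ∀ x v, 0 ≤ (C ^ n) x v := by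
    intro n
    induction n with
    | zero => intro x v; rw [pow_zero, Matrix.one_apply]; split <;> norm_num
    | succ n ih =>
      intro x v
      rw [pow_succ, Matrix.mul_apply]
      exact Finset.sum_nonneg fun y _ => mul_nonneg (ih x y) (hC0 y v)
  have colsum_pow : ∀ n : ℕ, ∀ v, ∑ x, (C ^ n) x v ≤ q ^ n := by
    intro n
    induction n with
    | zero => intro v; simp [Matrix.one_apply]
    | succ n ih =>
      intro v
      rw [pow_succ]
      calc ∑ x, (C ^ n * C) x v = ∑ y, (∑ x, (C ^ n) x y) * C y v := by
            simp_rw [Matrix.mul_apply, Finset.sum_mul]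
            rw [Finset.sum_comm]
        _ ≤ ∑ y, q ^ n * C y v :=
            Finset.sum_le_sum fun y _ => mul_le_mul_of_nonneg_right (ih y) (hC0 y v)
        _ = q ^ n * ∑ y, C y v := by rw [Finset.mul_sum]
        _ ≤ q ^ n * q := mul_le_mul_of_nonneg_left (colsum v) (pow_nonneg hq0 n)
        _ = q ^ (n + 1) := by rw [pow_succ]
  have entry_pow_le : ∀ n : ℕ, ∀ x v, (C ^ n) x v ≤ q ^ n := by
    intro n x v
    exact le_trans (Finset.single_le_sum (fun y _ => hCpow0 n y v) (mem_univ x)) (colsum_pow n v)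
  have rowsum : ∀ x, ∑ v, C x v ≤ 1 := by
    intro x
    have h2 : ∑ v, C x v = ∑ v ∈ G.neighborFinset x, c v := by
      simp only [hCapp]
      rw [← Finset.sum_filter, SimpleGraph.neighborFinset_eq_filter]
    rw [h2]
    exact hsum x
  -- entry bounds for powers of D := C * C
  have hDpow : ∀ n : ℕ, (C * C) ^ n = C ^ (2 * n) := by
    intro n; rw [pow_mul, sq]
  have hq20 : (0 : ℝ) ≤ q ^ 2 := sq_nonneg q
  have hq21 : q ^ 2 < 1 := by nlinarith
  have hDpow0 : ∀ n : ℕ, ∀ x v, 0 ≤ ((C * C) ^ n) x v := by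
    intro n x v; rw [hDpow]; exact hCpow0 _ x v
  have hDpow_le : ∀ n : ℕ, ∀ x v, ((C * C) ^ n) x v ≤ (q ^ 2) ^ n := by
    intro n x v; rw [hDpow, ← pow_mul]; exact entry_pow_le _ x v
  -- invertibility of 1 + C
  have hdet : IsUnit (1 + C).det := by
    rw [isUnit_iff_ne_zero]
    intro hdet0
    obtain ⟨x, hx0, hx⟩ := (Matrix.exists_mulVec_eq_zero_iff).mpr hdet0
    have hxC : C *ᵥ x = -x := by
      rw [Matrix.add_mulVec, Matrix.one_mulVec] at hx
      funext v
      have h := congrFun hx v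
      simp only [Pi.add_apply, Pi.zero_apply, Pi.neg_apply] at h ⊢
      linarith
    have hDx : (C * C) *ᵥ x = x := by
      rw [← Matrix.mulVec_mulVec, hxC, Matrix.mulVec_neg, hxC, neg_neg]
    have hDnx : ∀ n : ℕ, ((C * C) ^ n) *ᵥ x = x := by
      intro n
      induction n with
      | zero => rw [pow_zero, Matrix.one_mulVec]
      | succ n ih => rw [pow_succ, ← Matrix.mulVec_mulVec, hDx, ih]
    have hxz : ∀ v, x v = 0 := by
      intro v
      have habs : ∀ n : ℕ, |x v| ≤ (q ^ 2) ^ n * (∑ y, |x y|) := by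
        intro n
        have h1 : x v = ∑ y, ((C * C) ^ n) v y * x y := by
          conv_lhs => rw [← hDnx n]
          rfl
        rw [h1]
        calc |∑ y, ((C * C) ^ n) v y * x y| ≤ ∑ y, |((C * C) ^ n) v y * x y| :=
              Finset.abs_sum_le_sum_abs _ _
          _ ≤ ∑ y, (q ^ 2) ^ n * |x y| := by
              refine Finset.sum_le_sum fun y _ => ?_
              rw [abs_mul, abs_of_nonneg (hDpow0 n v y)]
              exact mul_le_mul_of_nonneg_right (hDpow_le n v y) (abs_nonneg _)
          _ = (q ^ 2) ^ n * ∑ y, |x y| := by rw [Finset.mul_sum]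
      have := le_zero_of_forall_le_pow_mul hq20 hq21 habs
      exact abs_eq_zero.mp (le_antisymm this (abs_nonneg _))
    exact hx0 (funext hxz)
  -- the solution of (1 + C) w = 1
  set w : V → ℝ := (1 + C)⁻¹ *ᵥ (fun _ => (1 : ℝ)) with hwdef
  have hone : (1 + C) *ᵥ w = fun _ => (1 : ℝ) := by
    rw [hwdef, Matrix.mulVec_mulVec, Matrix.mul_nonsing_inv _ hdet, Matrix.one_mulVec]
  have hw1 : ∀ v, (C *ᵥ w) v = 1 - w v := by
    intro v
    have h := congrFun hone v
    rw [Matrix.add_mulVec, Matrix.one_mulVec] at h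
    simp only [Pi.add_apply] at h
    linarith
  have key : ∀ v, ((C * C) *ᵥ w) v ≤ w v := by
    intro v
    have h1 : ((C * C) *ᵥ w) v = ∑ y, C v y * (1 - w y) := by
      rw [← Matrix.mulVec_mulVec]
      show ∑ y, C v y * (C *ᵥ w) y = _
      exact Finset.sum_congr rfl fun y _ => by rw [hw1]
    rw [h1]
    have h2 : ∑ y, C v y * (1 - w y) = (∑ y, C v y) - (C *ᵥ w) v := by
      simp_rw [mul_sub, Finset.sum_sub_distrib, mul_one]
      rfl
    rw [h2, hw1 v]
    have := rowsum v
    linarith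
  have hiter : ∀ n : ℕ, ∀ v, (((C * C) ^ n) *ᵥ w) v ≤ w v := by
    intro n
    induction n with
    | zero => intro v; rw [pow_zero, Matrix.one_mulVec]
    | succ n ih =>
      intro v
      have h1 : (((C * C) ^ (n + 1)) *ᵥ w) v = ∑ y, ((C * C) ^ n) v y * ((C * C) *ᵥ w) y := by
        rw [pow_succ, ← Matrix.mulVec_mulVec]
        rfl
      rw [h1]
      calc ∑ y, ((C * C) ^ n) v y * ((C * C) *ᵥ w) y ≤ ∑ y, ((C * C) ^ n) v y * w y :=
            Finset.sum_le_sum fun y _ => mul_le_mul_of_nonneg_left (key y) (hDpow0 n v y)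
        _ = (((C * C) ^ n) *ᵥ w) v := rfl
        _ ≤ w v := ih v
  have hwpos : ∀ v, 0 ≤ w v := by
    intro v
    have habs : ∀ n : ℕ, -(w v) ≤ (q ^ 2) ^ n * (∑ y, |w y|) := by
      intro n
      have hterm : ∀ y : V, -((q ^ 2) ^ n * |w y|) ≤ ((C * C) ^ n) v y * w y := by
        intro y
        have h3 : |((C * C) ^ n) v y * w y| ≤ (q ^ 2) ^ n * |w y| := by
          rw [abs_mul, abs_of_nonneg (hDpow0 n v y)]
          exact mul_le_mul_of_nonneg_right (hDpow_le n v y) (abs_nonneg _)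
        have h4 := neg_abs_le (((C * C) ^ n) v y * w y)
        linarith
      have h1 : -((q ^ 2) ^ n * (∑ y, |w y|)) ≤ (((C * C) ^ n) *ᵥ w) v := by
        show _ ≤ ∑ y, ((C * C) ^ n) v y * w y
        rw [Finset.mul_sum, ← Finset.sum_neg_distrib]
        exact Finset.sum_le_sum fun y _ => hterm y
      have h2 := hiter n v
      linarith
    have := le_zero_of_forall_le_pow_mul hq20 hq21 habs
    linarith
  -- final assembly
  have hΓ : Matrix.diagonal c * Matrix.diagonal β = Γ := by
    rw [Matrix.diagonal_mul_diagonal,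
      show (fun v => c v * β v) = γ from funext fun v => div_mul_cancel₀ _ (hβ v).ne']
  have hM : B + A * Γ = (1 + C) * B := by
    rw [add_mul, one_mul, hCdef, Matrix.mul_assoc, hΓ]
  rw [hM, Matrix.mul_inv_rev, ← Matrix.mulVec_mulVec, ← hwdef]
  have hBinv : (B : Matrix V V ℝ)⁻¹ = Matrix.diagonal (fun v => (β v)⁻¹) := by
    apply Matrix.inv_eq_right_inv
    rw [Matrix.diagonal_mul_diagonal,
      show (fun v => β v * (β v)⁻¹) = fun _ => (1 : ℝ) from
        funext fun v => mul_inv_cancel₀ (hβ v).ne', Matrix.diagonal_one]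
  rw [hBinv, Matrix.mulVec_diagonal]
  exact mul_nonneg (inv_nonneg.mpr (hβ u).le) (hwpos u)
end

section
/- Let G be a finite graph with no isolated vertices, with Laplacian L = D − A, and let B = diag(β), Γ = diag(γ) with all entries positive satisfying d_u γ_u/β_u < 1 for all vertices u. Set H = B + DΓ. Then the spectral radius of L·Γ·H^{-1} is strictly less than 1. -/
open Finset Matrix

/-- Under the condition `d_u γ_u / β_u < 1`, the spectral radius of `L Γ H⁻¹` is
strictly less than `1`, where `H = B + DΓ`. -/
theorem spectral_radius_LGammaHinv_lt_one {V : Type*} [Fintype V] [DecidableEq V]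
    (G : SimpleGraph V) [DecidableRel G.Adj]
    (hiso : ∀ v, 0 < G.degree v)
    (β γ : V → ℝ) (hβ : ∀ v, 0 < β v) (hγ : ∀ v, 0 < γ v)
    (hd : ∀ v, (G.degree v : ℝ) * γ v / β v < 1) :
    let A : Matrix V V ℝ := G.adjMatrix ℝ
    let D : Matrix V V ℝ := Matrix.diagonal (fun v => (G.degree v : ℝ))
    let L : Matrix V V ℝ := D - A
    let B : Matrix V V ℝ := Matrix.diagonal β
    let Γ : Matrix V V ℝ := Matrix.diagonal γ
    let H : Matrix V V ℝ := B + D * Γ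
    ∀ μ ∈ spectrum ℂ ((L * Γ * H⁻¹).map (Complex.ofReal)), ‖μ‖ < 1 := by
  intro A D L B Γ H μ hμ
  -- h v > 0
  set h : V → ℝ := fun v => β v + (G.degree v : ℝ) * γ v with hh
  have hhpos : ∀ v, 0 < h v := fun v =>
    add_pos (hβ v) (mul_pos (by exact_mod_cast hiso v) (hγ v))
  -- d v γ v < β v
  have hdγ : ∀ v, (G.degree v : ℝ) * γ v < β v := fun v =>
    (div_lt_one (hβ v)).mp (hd v)
  -- H = diagonal h
  have hH : H = Matrix.diagonal h := by
    simp only [H, B, D, Γ, Matrix.diagonal_mul_diagonal, Matrix.diagonal_add, hh]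
  have hHinv : H⁻¹ = Matrix.diagonal fun v => (h v)⁻¹ := by
    rw [hH]
    apply Matrix.inv_eq_right_inv
    rw [Matrix.diagonal_mul_diagonal]
    have : (fun v => h v * (h v)⁻¹) = fun _ => (1:ℝ) := by
      funext v; exact mul_inv_cancel₀ (hhpos v).ne'
    rw [this, Matrix.diagonal_one]
  set M : Matrix V V ℝ := L * Γ * H⁻¹ with hM
  -- entries of M
  have hMentry : ∀ u v, M u v = L u v * (γ v * (h v)⁻¹) := by
    intro u v
    rw [hM, hHinv, Matrix.mul_assoc, Matrix.diagonal_mul_diagonal,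
      Matrix.mul_diagonal]
  -- column sums of |L|
  have hAcol : ∀ v, ∑ u, A u v = (G.degree v : ℝ) := by
    intro v
    have hsym : ∀ u, A u v = A v u := fun u => by
      simp [A, SimpleGraph.adjMatrix_apply, G.adj_comm]
    have := SimpleGraph.adjMatrix_mulVec_const_apply (G := G) (α := ℝ) (a := 1) (v := v)
    simp only [Matrix.mulVec, dotProduct, Function.const_apply, mul_one] at this
    simp_rw [hsym]
    exact this
  have hLcol : ∀ v, ∑ u, |L u v| = 2 * (G.degree v : ℝ) := by
    intro v
    have : ∀ u, |L u v| = (if u = v then (G.degree v : ℝ) else 0) + A u v := by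
      intro u
      by_cases huv : u = v
      · subst huv
        have : A u u = 0 := by simp [A]
        simp [L, D, this, Matrix.diagonal_apply_eq, abs_of_nonneg (by positivity : (0:ℝ) ≤ (G.degree u : ℝ))]
      · have hA0 : (0:ℝ) ≤ A u v := by simp [A]; positivity
        simp [L, D, Matrix.diagonal_apply_ne _ huv, huv, abs_of_nonneg hA0]
    simp_rw [this, Finset.sum_add_distrib, Finset.sum_ite_eq' Finset.univ v, hAcol v]
    simp; ring
  -- column sums of |M| are < 1
  have hcol : ∀ v, ∑ u, |M u v| < 1 := by
    intro v
    have hpos : 0 < γ v * (h v)⁻¹ := mul_pos (hγ v) (inv_pos.mpr (hhpos v))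
    have : ∑ u, |M u v| = (2 * (G.degree v : ℝ)) * (γ v * (h v)⁻¹) := by
      have e1 : ∀ u, |M u v| = |L u v| * (γ v * (h v)⁻¹) := fun u => by
        rw [hMentry, abs_mul, abs_of_pos hpos]
      rw [Finset.sum_congr rfl fun u _ => e1 u, ← Finset.sum_mul, hLcol v]
    rw [this]
    have h1 : (2 * (G.degree v : ℝ)) * (γ v * (h v)⁻¹) = (2 * ((G.degree v : ℝ) * γ v)) / h v := by
      ring
    rw [h1, div_lt_one (hhpos v)]
    have h2 := hdγ v
    show 2 * ((G.degree v : ℝ) * γ v) < β v + (G.degree v : ℝ) * γ v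
    linarith
  -- eigenvector for μ
  set N : Matrix V V ℂ := M.map Complex.ofReal with hN
  have hev : Module.End.HasEigenvalue (Matrix.toLinAlgEquiv' N) μ := by
    rw [Module.End.hasEigenvalue_iff_mem_spectrum]
    rwa [AlgEquiv.spectrum_eq Matrix.toLinAlgEquiv' N]
  obtain ⟨x, hx⟩ := hev.exists_hasEigenvector
  have hxeq : N.mulVec x = μ • x := by
    have h0 := hx.apply_eq_smul
    have h1 : (Matrix.toLinAlgEquiv' N) x = N.mulVec x := rfl
    rwa [h1] at h0
  have hx0 := hx.right
  -- ℓ¹ norm argument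
  set S : ℝ := ∑ v, ‖x v‖ with hS
  obtain ⟨v₀, hv₀⟩ : ∃ v, x v ≠ 0 := by
    by_contra hc
    push_neg at hc
    exact hx0 (funext hc)
  have hSpos : 0 < S :=
    Finset.sum_pos' (fun u _ => norm_nonneg _)
      ⟨v₀, Finset.mem_univ v₀, norm_pos_iff.mpr hv₀⟩
  have key : ‖μ‖ * S < S := by
    have h2 : ‖μ‖ * S = ∑ u, ‖(N.mulVec x) u‖ := by
      rw [hxeq]
      simp [hS, Finset.mul_sum, Pi.smul_apply, smul_eq_mul, _root_.map_mul]
    have h3 : ∀ u, ‖(N.mulVec x) u‖ ≤ ∑ v, |M u v| * ‖x v‖ := by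
      intro u
      refine le_trans (by exact norm_sum_le _ _) (le_of_eq ?_)
      refine Finset.sum_congr rfl fun v _ => ?_
      simp [hN, Matrix.mulVec, dotProduct, Matrix.map_apply, _root_.map_mul,
        Complex.norm_real]
    have h4 : ∑ u, ∑ v, |M u v| * ‖x v‖
        = ∑ v, (∑ u, |M u v|) * ‖x v‖ := by
      rw [Finset.sum_comm]
      simp [Finset.sum_mul]
    have h5 : ∑ v, (∑ u, |M u v|) * ‖x v‖ < S := by
      rw [hS]
      refine Finset.sum_lt_sum (fun v _ => ?_) ⟨v₀, Finset.mem_univ v₀, ?_⟩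
      · calc (∑ u, |M u v|) * ‖x v‖
            ≤ 1 * ‖x v‖ :=
              mul_le_mul_of_nonneg_right (le_of_lt (hcol v)) (norm_nonneg _)
          _ = ‖x v‖ := one_mul _
      · calc (∑ u, |M u v₀|) * ‖x v₀‖
            < 1 * ‖x v₀‖ :=
              mul_lt_mul_of_pos_right (hcol v₀) (norm_pos_iff.mpr hv₀)
          _ = ‖x v₀‖ := one_mul _
    calc ‖μ‖ * S = ∑ u, ‖(N.mulVec x) u‖ := h2
      _ ≤ ∑ u, ∑ v, |M u v| * ‖x v‖ := Finset.sum_le_sum fun u _ => h3 u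
      _ = ∑ v, (∑ u, |M u v|) * ‖x v‖ := h4
      _ < S := h5
  have : ‖μ‖ < 1 := by
    by_contra hc
    push_neg at hc
    nlinarith
  simpa using this
end

section
/- For s > 0, the function τ(x) = W(sx)/(x(1+W(sx))) defined for x > 0 is strictly decreasing, with derivative τ'(x) = −W(sx)²(2+W(sx))/(x²(1+W(sx))³). -/
open Set

private lemma lambert_facts {W : ℝ → ℝ}
    (hWpos : ∀ x > 0, 0 < W x)
    (hW : ∀ x > 0, W x * Real.exp (W x) = x) :
    ∀ x > 0, HasDerivAt W (W x / (x * (1 + W x))) x := by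
  set f : ℝ → ℝ := fun t => t * Real.exp t with hf
  have hmono : StrictMonoOn f (Ioi 0) := by
    intro a ha b hb hab
    have := Real.exp_lt_exp.mpr hab
    exact mul_lt_mul hab this.le (Real.exp_pos a) (le_of_lt hb)
  have hWid : ∀ t > 0, W (f t) = t := by
    intro t ht
    have hft : 0 < f t := mul_pos ht (Real.exp_pos t)
    exact hmono.injOn (mem_Ioi.2 (hWpos _ hft)) (mem_Ioi.2 ht) (hW _ hft)
  have himg : W '' (Ioi 0) = Ioi 0 := by
    ext t
    constructor
    · rintro ⟨x, hx, rfl⟩; exact hWpos x hx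
    · intro ht
      exact ⟨f t, mul_pos ht (Real.exp_pos t), hWid t ht⟩
  have hWmono : StrictMonoOn W (Ioi 0) := by
    intro a ha b hb hab
    by_contra h
    push_neg at h
    have : f (W b) ≤ f (W a) := by
      rcases eq_or_lt_of_le h with h' | h'
      · rw [h']
      · exact (hmono (mem_Ioi.2 (hWpos b hb)) (mem_Ioi.2 (hWpos a ha)) h').le
    rw [hf] at this
    simp only [hW a ha, hW b hb] at this
    linarith
  intro x hx
  have hWcont : ContinuousAt W x := by
    apply hWmono.continuousAt_of_image_mem_nhds (s := Ioi 0) (Ioi_mem_nhds hx)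
    rw [himg]
    exact Ioi_mem_nhds (hWpos x hx)
  have hfd : HasDerivAt f ((1 + W x) * Real.exp (W x)) (W x) := by
    have := (hasDerivAt_id (W x)).mul (Real.hasDerivAt_exp (W x))
    refine this.congr_deriv (Eq.symm ?_)
    simp [id_eq]
    ring
  have hne : (1 + W x) * Real.exp (W x) ≠ 0 :=
    ne_of_gt (mul_pos (by linarith [hWpos x hx]) (Real.exp_pos _))
  have hfg : ∀ᶠ y in nhds x, f (W y) = y := by
    filter_upwards [Ioi_mem_nhds hx] with y hy
    exact hW y hy
  have := HasDerivAt.of_local_left_inverse hWcont hfd hne hfg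
  refine this.congr_deriv (Eq.symm ?_)
  have hx' : Real.exp (W x) = x / W x := by
    field_simp [(hWpos x hx).ne']
    linarith [hW x hx]
  have h1 : (0:ℝ) < 1 + W x := by linarith [hWpos x hx]
  rw [hx', eq_comm, inv_eq_iff_eq_inv, inv_div]
  ring

/-- For `s > 0`, the function `τ(x) = W(sx)/(x(1+W(sx)))` is strictly decreasing on
`(0,∞)` with derivative `-W(sx)²(2+W(sx))/(x²(1+W(sx))³)`. -/
theorem tau_strictAnti_and_deriv {W : ℝ → ℝ}
    (hWpos : ∀ x > 0, 0 < W x)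
    (hW : ∀ x > 0, W x * Real.exp (W x) = x)
    (s : ℝ) (hs : 0 < s) :
    let τ : ℝ → ℝ := fun x => W (s * x) / (x * (1 + W (s * x)))
    StrictAntiOn τ (Set.Ioi 0) ∧
      ∀ x > 0, HasDerivAt τ
        (-((W (s * x)) ^ 2 * (2 + W (s * x))) / (x ^ 2 * (1 + W (s * x)) ^ 3)) x := by
  intro τ
  have hWd := lambert_facts hWpos hW
  have hderiv : ∀ x > 0, HasDerivAt τ
      (-((W (s * x)) ^ 2 * (2 + W (s * x))) / (x ^ 2 * (1 + W (s * x)) ^ 3)) x := by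
    intro x hx
    have hsx : 0 < s * x := mul_pos hs hx
    set w := W (s * x) with hw
    have hwpos : 0 < w := hWpos _ hsx
    have h1w : (0:ℝ) < 1 + w := by linarith
    -- derivative of x ↦ W (s*x)
    have hg : HasDerivAt (fun y => W (s * y)) (w / (x * (1 + w))) x := by
      have := (hWd (s * x) hsx).comp x ((hasDerivAt_id x).const_mul s)
      refine this.congr_deriv (Eq.symm ?_)
      · rw [← hw]
        field_simp
    have hden : HasDerivAt (fun y => y * (1 + W (s * y)))
        ((1 + w) + x * (w / (x * (1 + w)))) x := by
      have := (hasDerivAt_id x).mul ((hasDerivAt_const x 1).add hg)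
      refine this.congr_deriv (Eq.symm ?_)
      simp only [id_eq, Pi.add_apply, ← hw]
      ring
    have hdenne : x * (1 + w) ≠ 0 := ne_of_gt (mul_pos hx h1w)
    have := hg.div hden hdenne
    refine this.congr_deriv (Eq.symm ?_)
    rw [← hw]
    field_simp
    ring
  refine ⟨?_, hderiv⟩
  have hconv : Convex ℝ (Ioi (0:ℝ)) := convex_Ioi 0
  apply strictAntiOn_of_deriv_neg hconv
  · intro y hy
    exact ((hderiv y hy).continuousAt).continuousWithinAt
  · intro y hy
    rw [interior_Ioi] at hy
    rw [(hderiv y hy).deriv]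
    have hsy : 0 < s * y := mul_pos hs hy
    have hwpos := hWpos _ hsy
    apply div_neg_of_neg_of_pos
    · have : 0 < (W (s * y)) ^ 2 * (2 + W (s * y)) :=
        mul_pos (pow_pos hwpos 2) (by linarith)
      linarith
    · exact mul_pos (pow_pos hy 2) (pow_pos (by linarith) 3)
end
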